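/- arXiv:1303.0083 — 2 statements merged into one kernel-verified Lean document; each statement's English description precedes it below -/
import Mathlib

section
/- Let k be a field, S = k[x,y,z], I = (x³, x²y, y³, z³, x²z²), and R = S/I. In the Koszul homology H₁ of the Koszul complex on x,y,z over R, the classes of the cycles x²e₁, xy e₁, xz e₁, y² e₂, z² e₃ are k-linearly independent modulo the image of φ₂ : R³ → R³ (the Koszul differential in degree 2); that is, no nontrivial k-linear combination of these five elements of R³ lies in im(φ₂). -/
open MvPolynomial

noncomputable def exIdeal14 (k : Type*) [Field k] : Ideal (MvPolynomial (Fin 3) k) :=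
  Ideal.span {X 0 ^ 3, X 0 ^ 2 * X 1, X 1 ^ 3, X 2 ^ 3, X 0 ^ 2 * X 2 ^ 2}

lemma key {k : Type*} [Field k] {p : MvPolynomial (Fin 3) k} (hp : p ∈ exIdeal14 k)
    (m : Fin 3 →₀ ℕ) (hm : (m.sum fun _ e => e) ≤ 2) : coeff m p = 0 := by
  induction hp using Submodule.span_induction generalizing m with
  | mem g hg =>
      have key2 : ∀ (d : Fin 3 →₀ ℕ), 3 ≤ (d.sum fun _ e => e) →
          coeff m (monomial d (1:k)) = 0 := by
        intro d hd
        rw [coeff_monomial, if_neg]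
        rintro rfl
        omega
      simp only [Set.mem_insert_iff, Set.mem_singleton_iff] at hg
      rcases hg with rfl | rfl | rfl | rfl | rfl
      · rw [X_pow_eq_monomial]
        exact key2 _ (by simp)
      · rw [X_pow_eq_monomial, X, monomial_mul, mul_one]
        refine key2 _ ?_
        rw [Finsupp.sum_add_index (by simp) (by intros; rfl)]
        simp
      · rw [X_pow_eq_monomial]
        exact key2 _ (by simp)
      · rw [X_pow_eq_monomial]
        exact key2 _ (by simp)
      · rw [X_pow_eq_monomial, X_pow_eq_monomial, monomial_mul, mul_one]
        refine key2 _ ?_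
        rw [Finsupp.sum_add_index (by simp) (by intros; rfl)]
        simp
  | zero => simp
  | add p q _ _ hp hq => simp [coeff_add, hp m hm, hq m hm]
  | smul r p _ hp =>
      rw [smul_eq_mul, coeff_mul]
      apply Finset.sum_eq_zero
      intro x hx
      rw [Finset.HasAntidiagonal.mem_antidiagonal] at hx
      have : (x.2.sum fun _ e => e) ≤ 2 := by
        rw [← hx, Finsupp.sum_add_index (by simp) (by intros; rfl)] at hm
        omega
      simp [hp x.2 this]
/-- The quotient ring `R = k[x,y,z]/I` of Example 3.1. -/
noncomputable abbrev ExRing14 (k : Type*) [Field k] :=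
  MvPolynomial (Fin 3) k ⧸ exIdeal14 k

/-- The class in `R` of a polynomial. -/
noncomputable def exMk14 (k : Type*) [Field k] (p : MvPolynomial (Fin 3) k) : ExRing14 k :=
  Ideal.Quotient.mk (exIdeal14 k) p

/-- The Koszul differential `φ₂ : R³ → R³` on `x,y,z` over `R`, given by the matrix
`[[−y,−z,0],[x,0,−z],[0,x,y]]`. -/
noncomputable def exPhi2 (k : Type*) [Field k] (u : Fin 3 → ExRing14 k) :
    Fin 3 → ExRing14 k :=
  ![-(exMk14 k (X 1)) * u 0 - exMk14 k (X 2) * u 1,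
    exMk14 k (X 0) * u 0 - exMk14 k (X 2) * u 2,
    exMk14 k (X 0) * u 1 + exMk14 k (X 1) * u 2]

/-- The five Koszul 1-cycles `x²e₁, xy e₁, xz e₁, y² e₂, z² e₃` of Example 3.1. -/
noncomputable def exCycles (k : Type*) [Field k] : Fin 5 → (Fin 3 → ExRing14 k) :=
  ![Pi.single 0 (exMk14 k (X 0 ^ 2)),
    Pi.single 0 (exMk14 k (X 0 * X 1)),
    Pi.single 0 (exMk14 k (X 0 * X 2)),
    Pi.single 1 (exMk14 k (X 1 ^ 2)),
    Pi.single 2 (exMk14 k (X 2 ^ 2))]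

set_option maxHeartbeats 1600000 in
/-- In Example 3.1, the classes of the cycles `x²e₁, xy e₁, xz e₁, y² e₂, z² e₃` are
`k`-linearly independent modulo `im(φ₂)`: no nontrivial `k`-linear combination of them
lies in the image of the Koszul differential `φ₂`. -/
theorem stmt14 (k : Type*) [Field k] (c : Fin 5 → k)
    (h : (∑ i, c i • exCycles k i) ∈ Set.range (exPhi2 k)) : c = 0 := by
  obtain ⟨u, hu⟩ := h
  obtain ⟨a, ha⟩ := Ideal.Quotient.mk_surjective (u 0)
  obtain ⟨b, hb⟩ := Ideal.Quotient.mk_surjective (u 1)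
  obtain ⟨d, hd⟩ := Ideal.Quotient.mk_surjective (u 2)
  have hs : ∀ (r : k) (p : MvPolynomial (Fin 3) k),
      r • (Ideal.Quotient.mk (exIdeal14 k) p) = Ideal.Quotient.mk (exIdeal14 k) (C r * p) := by
    intro r p
    rw [← smul_eq_C_mul]
    exact (map_smul (Ideal.Quotient.mkₐ k (exIdeal14 k)) r p).symm
  have h0 := congrFun hu 0
  have h1 := congrFun hu 1
  have h2 := congrFun hu 2
  simp only [exPhi2, exCycles, exMk14, Fin.sum_univ_five, Matrix.cons_val_zero,
    Matrix.cons_val_one, Matrix.head_cons, Matrix.cons_val_two, Matrix.tail_cons,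
    Matrix.cons_val_three, Matrix.cons_val_four, Pi.add_apply, Pi.smul_apply,
    Pi.single_apply] at h0 h1 h2
  rw [← ha, ← hb] at h0
  rw [← ha, ← hd] at h1
  rw [← hb, ← hd] at h2
  norm_num [Fin.ext_iff] at h0 h1 h2
  set mk := Ideal.Quotient.mk (exIdeal14 k) with hmk
  have hs2 : ∀ (r : k) (q : ExRing14 k), r • q = mk (C r) * q := by
    intro r q
    obtain ⟨p, rfl⟩ := Ideal.Quotient.mk_surjective q
    rw [hmk, ← map_mul, ← smul_eq_C_mul]
    exact (map_smul (Ideal.Quotient.mkₐ k (exIdeal14 k)) r p).symm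
  simp only [hs2] at h0 h1 h2
  have E0 : (-(X 1 * a) - X 2 * b -
      (C (c 0) * X 0 ^ 2 + C (c 1) * (X 0 * X 1) + C (c 2) * (X 0 * X 2)) :
      MvPolynomial (Fin 3) k) ∈ exIdeal14 k := by
    rw [← Ideal.Quotient.eq_zero_iff_mem]
    simp only [map_sub, map_add, map_neg, map_mul, map_pow, ← hmk]
    linear_combination h0
  have E1 : (X 0 * a - X 2 * d - C (c 3) * X 1 ^ 2 : MvPolynomial (Fin 3) k) ∈ exIdeal14 k := by
    rw [← Ideal.Quotient.eq_zero_iff_mem]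
    simp only [map_sub, map_add, map_neg, map_mul, map_pow, ← hmk]
    linear_combination h1
  have E2 : (X 0 * b + X 1 * d - C (c 4) * X 2 ^ 2 : MvPolynomial (Fin 3) k) ∈ exIdeal14 k := by
    rw [← Ideal.Quotient.eq_zero_iff_mem]
    simp only [map_sub, map_add, map_neg, map_mul, map_pow, ← hmk]
    linear_combination h2
  have hd2 : ∀ i : Fin 3, ((Finsupp.single i 2).sum fun _ e => e) ≤ 2 := by
    intro i; simp
  have hd11 : ∀ i j : Fin 3, ((Finsupp.single i 1 + Finsupp.single j 1).sum fun _ e => e) ≤ 2 := by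
    intro i j
    rw [Finsupp.sum_add_index (by simp) (by intros; rfl)]
    simp
  have k1 := key E0 (Finsupp.single 0 2) (hd2 0)
  have k2 := key E1 (Finsupp.single 1 2) (hd2 1)
  have k3 := key E1 (Finsupp.single 0 2) (hd2 0)
  have k4 := key E0 (Finsupp.single 0 1 + Finsupp.single 1 1) (hd11 0 1)
  have k5 := key E2 (Finsupp.single 2 2) (hd2 2)
  have k6 := key E2 (Finsupp.single 0 2) (hd2 0)
  have k7 := key E0 (Finsupp.single 0 1 + Finsupp.single 2 1) (hd11 0 2)
  have r2 : (Finsupp.single (0:Fin 3) 1 + Finsupp.single 1 1) - Finsupp.single 1 1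
      = Finsupp.single 0 1 := by
    ext i; fin_cases i <;> simp [Finsupp.single_apply]
  have r3 : (Finsupp.single (0:Fin 3) 1 + Finsupp.single 2 1) - Finsupp.single 2 1
      = Finsupp.single 0 1 := by
    ext i; fin_cases i <;> simp [Finsupp.single_apply]
  have r1 : (Finsupp.single (0:Fin 3) 2) - Finsupp.single 0 1 = Finsupp.single 0 1 := by
    ext i; fin_cases i <;> simp [Finsupp.single_apply]
  simp only [coeff_sub, coeff_add, coeff_neg, coeff_C_mul, coeff_X_mul', coeff_X_pow,
    coeff_X', Finsupp.mem_support_iff, Finsupp.single_apply, Finsupp.add_apply,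
    r1, r2, r3] at k1 k2 k3 k4 k5 k6 k7
  norm_num [Finsupp.ext_iff, Finsupp.single_apply,
    Finsupp.add_apply] at k1 k2 k3 k4 k5 k6 k7
  simp (config := { decide := true }) only [if_false, neg_zero, zero_sub, zero_add, sub_eq_zero, neg_eq_zero] at k2 k5
  simp (config := { decide := true }) only [if_true, if_false, add_zero, zero_add, sub_zero,
    neg_eq_zero, neg_sub, neg_neg, neg_add_rev] at k1 k3 k4 k6 k7
  have hc0 : c 0 = 0 := by linear_combination -k1
  have hc1 : c 1 = 0 := by linear_combination -k3 - k4
  have hc2 : c 2 = 0 := by linear_combination -k6 - k7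
  funext i
  fin_cases i
  · exact hc0
  · exact hc1
  · exact hc2
  · exact k2
  · exact k5
end

section
/- Let k be a field and R = k[x,y,z]/I with I a monomial ideal, and suppose no generator of I divides x^{a−1} y^{β} z^{γ−1} for given a ≥ 1, β ≥ 0, γ ≥ 1. Then the vector (x^{a−1} y^{β} z^{γ}, 0, 0) ∈ R³ is not in the R-span of the single vector (z, −y, x), provided additionally x^{a−1} y^{β} z^{γ} ∉ I; more precisely, if r·(z,−y,x) = (x^{a−1}y^{β}z^{γ}, 0, 0) for some r ∈ R, with r represented by a polynomial, then x^{a−1} y^{β+1} z^{γ−1} ∈ I. -/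
open MvPolynomial

/-- The monomial ideal generated by the monomials with exponent vectors in `V`. -/
noncomputable def monIdeal (k : Type*) [Field k] (V : Set (Fin 3 → ℕ)) :
    Ideal (MvPolynomial (Fin 3) k) :=
  Ideal.span ((fun v => ∏ t, X t ^ v t) '' V)

lemma monIdeal_eq (k : Type*) [Field k] (V : Set (Fin 3 → ℕ)) :
    monIdeal k V = Ideal.span ((fun s => monomial s (1 : k)) ''
      (Finsupp.equivFunOnFinite.symm '' V)) := by
  rw [monIdeal, Set.image_image]
  congr 1
  ext f
  constructor
  · rintro ⟨v, hv, rfl⟩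
    refine ⟨v, hv, ?_⟩
    show monomial _ 1 = _
    rw [monomial_eq, C_1, one_mul, Finsupp.prod_fintype _ _ (fun i => pow_zero _)]
    rfl
  · rintro ⟨v, hv, rfl⟩
    refine ⟨v, hv, ?_⟩
    show _ = monomial _ 1
    rw [monomial_eq, C_1, one_mul, Finsupp.prod_fintype _ _ (fun i => pow_zero _)]
    rfl

lemma monomial_mem_iff (k : Type*) [Field k] (V : Set (Fin 3 → ℕ)) (d : Fin 3 →₀ ℕ) :
    (monomial d (1 : k)) ∈ monIdeal k V ↔ ∃ v ∈ V, Finsupp.equivFunOnFinite.symm v ≤ d := by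
  rw [monIdeal_eq, mem_ideal_span_monomial_image]
  constructor
  · intro H
    obtain ⟨s, ⟨v, hv, rfl⟩, hle⟩ := H d (by simp [mem_support_iff])
    exact ⟨v, hv, hle⟩
  · rintro ⟨v, hv, hle⟩ xi hxi
    rw [mem_support_iff, coeff_monomial] at hxi
    have : d = xi := by by_contra hne; simp [hne] at hxi
    exact ⟨_, ⟨v, hv, rfl⟩, this ▸ hle⟩

lemma pow_mul_eq_monomial (k : Type*) [Field k] (i j l : ℕ) :
    (X 0 ^ i * X 1 ^ j * X 2 ^ l : MvPolynomial (Fin 3) k)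
      = monomial (Finsupp.equivFunOnFinite.symm ![i, j, l]) 1 := by
  rw [monomial_eq, C_1, one_mul, Finsupp.prod_fintype _ _ (fun i => pow_zero _),
    Fin.prod_univ_three]
  rfl

set_option synthInstance.maxHeartbeats 800000 in
/-- Boundary obstruction from Theorem 3.3: in `R = k[x,y,z]/I` for a monomial ideal `I`,
if `(x^{a−1} y^β z^γ, 0, 0) = r·(z, −y, x)` in `R³` for some `r ∈ R` (with `a, γ ≥ 1`),
then `x^{a−1} y^{β+1} z^{γ−1} ∈ I` or `x^{a−1} y^β z^γ ∈ I`. -/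
theorem stmt18 (k : Type*) [Field k] (V : Set (Fin 3 → ℕ)) (a β γ : ℕ)
    (ha : 1 ≤ a) (hγ : 1 ≤ γ)
    (h : ∃ r : MvPolynomial (Fin 3) k ⧸ monIdeal k V,
      r • (![Ideal.Quotient.mk (monIdeal k V) (X 2),
             -(Ideal.Quotient.mk (monIdeal k V) (X 1)),
             Ideal.Quotient.mk (monIdeal k V) (X 0)] :
          Fin 3 → MvPolynomial (Fin 3) k ⧸ monIdeal k V) =
        ![Ideal.Quotient.mk (monIdeal k V) (X 0 ^ (a - 1) * X 1 ^ β * X 2 ^ γ), 0, 0]) :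
    (X 0 ^ (a - 1) * X 1 ^ (β + 1) * X 2 ^ (γ - 1) : MvPolynomial (Fin 3) k) ∈ monIdeal k V ∨
      (X 0 ^ (a - 1) * X 1 ^ β * X 2 ^ γ : MvPolynomial (Fin 3) k) ∈ monIdeal k V := by
  obtain ⟨r, hr⟩ := h
  obtain ⟨p, rfl⟩ := Ideal.Quotient.mk_surjective r
  by_cases hm : (X 0 ^ (a - 1) * X 1 ^ β * X 2 ^ γ : MvPolynomial (Fin 3) k) ∈ monIdeal k V
  · exact Or.inr hm
  left
  have h0 := congr_fun hr 0
  have h1 := congr_fun hr 1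
  simp only [Pi.smul_apply, Matrix.cons_val_zero, Matrix.cons_val_one, Matrix.head_cons,
    smul_eq_mul, smul_neg] at h0 h1
  rw [← map_mul, Ideal.Quotient.eq] at h0
  replace h1 : (p * X 1 : MvPolynomial (Fin 3) k) ∈ monIdeal k V := by
    rw [← Ideal.Quotient.eq_zero_iff_mem, map_mul]
    linear_combination -h1
  -- h0 : p * X 2 - (X0^(a-1) * X1^β * X2^γ) ∈ I
  -- h1 : p * X 1 ∈ I
  set d' : Fin 3 →₀ ℕ := Finsupp.equivFunOnFinite.symm ![a - 1, β, γ - 1] with hd'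
  have hd2 : (Finsupp.equivFunOnFinite.symm ![a - 1, β, γ] : Fin 3 →₀ ℕ)
      = d' + Finsupp.single 2 1 := by
    ext i
    fin_cases i <;>
      simp [hd', Finsupp.coe_equivFunOnFinite_symm, Finsupp.single_apply] <;> omega
  -- coefficient of m in p * X 2 is 1
  have hcoeff : coeff d' p = 1 := by
    by_contra hc
    apply hm
    rw [pow_mul_eq_monomial, monomial_mem_iff]
    have hmem := h0
    rw [monIdeal_eq, mem_ideal_span_monomial_image] at hmem
    have hsupp : (Finsupp.equivFunOnFinite.symm ![a - 1, β, γ] : Fin 3 →₀ ℕ)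
        ∈ (p * X 2 - X 0 ^ (a - 1) * X 1 ^ β * X 2 ^ γ).support := by
      rw [mem_support_iff, coeff_sub, pow_mul_eq_monomial, coeff_monomial, if_pos rfl,
        hd2, coeff_mul_X]
      intro hzero
      exact hc (by linear_combination hzero)
    obtain ⟨s, ⟨v, hv, rfl⟩, hle⟩ := hmem _ hsupp
    exact ⟨v, hv, hle⟩
  -- now p * X 1 ∈ I gives the target
  rw [monIdeal_eq, mem_ideal_span_monomial_image] at h1
  have hsupp1 : d' + Finsupp.single 1 1 ∈ (p * X 1).support := by
    rw [mem_support_iff, coeff_mul_X, hcoeff]; exact one_ne_zero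
  obtain ⟨s, ⟨v, hv, rfl⟩, hle⟩ := h1 _ hsupp1
  rw [pow_mul_eq_monomial, monomial_mem_iff]
  refine ⟨v, hv, hle.trans ?_⟩
  intro i
  fin_cases i <;> simp [hd', Finsupp.coe_equivFunOnFinite_symm, Finsupp.single_apply]
end
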